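/- Assume 𝔟 > ω₁. If Y ⊆ 2^ω is Hurewicz and X ⊆ 2^ω satisfies property (†), then X × Y is Hurewicz. -/

import Mathlib

def IsHurewicz (X : Type*) [TopologicalSpace X] : Prop :=
  ∀ U : ℕ → Set (Set X),
    (∀ n, ∀ V ∈ U n, IsOpen V) → (∀ n, ⋃₀ U n = Set.univ) →
    ∃ V : ℕ → Set (Set X),
      (∀ n, V n ⊆ U n ∧ (V n).Finite) ∧
      ∀ x : X, ∀ᶠ n in Filter.atTop, x ∈ ⋃₀ V n

/-- Property \`(†)\` for a subset \`X\` of the Cantor space. -/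
def DaggerProp (X : Set (ℕ → Bool)) : Prop :=
  ∀ R : Set (ℕ → Bool) → Set (ℕ → Bool),
    (∀ Q : Set (ℕ → Bool), Q ⊆ X → Q.Countable → IsGδ (R Q) ∧ Q ⊆ R Q) →
    ∃ (ι : Type) (_ : Cardinal.mk ι = Cardinal.aleph 1)
      (Qs : ι → Set (ℕ → Bool)) (K : ι → Set (ℕ → Bool)),
      (∀ i, Qs i ⊆ X ∧ (Qs i).Countable) ∧
      (∀ i, IsSigmaCompact (K i) ∧ K i ⊆ R (Qs i)) ∧
      X ⊆ ⋃ i, K i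

noncomputable def bCardinal : Cardinal :=
  sInf { c : Cardinal |
    ∃ F : Set (ℕ → ℕ), Cardinal.mk F = c ∧
      ∀ g : ℕ → ℕ, ∃ f ∈ F, ¬ ∀ᶠ n in Filter.atTop, f n ≤ g n }

open Set Filter Topology TopologicalSpace

abbrev CSp := ℕ → Bool

lemma finite_sUnion_bound {α : Type*} {A : ℕ → Set α} (hmono : Monotone A)
    {V : Set (Set α)} (hfin : V.Finite) :
    (∀ W ∈ V, ∃ m, W ⊆ A m) → ∃ mb, ⋃₀ V ⊆ A mb := by
  refine Set.Finite.induction_on (motive := fun V _ => (∀ W ∈ V, ∃ m, W ⊆ A m) → ∃ mb, ⋃₀ V ⊆ A mb) V hfin (fun _ => ⟨0, by simp⟩) ?_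
  intro a s _ _ ih hsub
  obtain ⟨m1, hm1⟩ := hsub a (mem_insert _ _)
  obtain ⟨m2, hm2⟩ := ih fun W hW => hsub W (mem_insert_of_mem _ hW)
  refine ⟨max m1 m2, ?_⟩
  rw [sUnion_insert]
  exact union_subset (hm1.trans (hmono (le_max_left _ _)))
    (hm2.trans (hmono (le_max_right _ _)))


lemma hurewicz_seq {α : Type*} [TopologicalSpace α] {S : Set α} (hS : IsHurewicz S)
    {A : ℕ → ℕ → Set α} (hopen : ∀ n m, IsOpen (A n m)) (hmono : ∀ n, Monotone (A n))
    (hcov : ∀ n, S ⊆ ⋃ m, A n m) :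
    ∃ f : ℕ → ℕ, ∀ y ∈ S, ∀ᶠ n in Filter.atTop, y ∈ A n (f n) := by
  obtain ⟨V, hV1, hV2⟩ := hS (fun n => Set.range fun m => (Subtype.val ⁻¹' (A n m) : Set S))
    (by rintro n V ⟨m, rfl⟩; exact (hopen n m).preimage continuous_subtype_val)
    (by
      intro n
      ext ⟨y, hy⟩
      simp only [Set.mem_sUnion, Set.mem_univ, iff_true]
      obtain ⟨m, hm⟩ := mem_iUnion.mp (hcov n hy)
      exact ⟨_, ⟨m, rfl⟩, hm⟩)
  have key : ∀ n, ∃ mb, ⋃₀ (V n) ⊆ (Subtype.val ⁻¹' (A n mb) : Set S) := by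
    intro n
    refine finite_sUnion_bound (A := fun m => (Subtype.val ⁻¹' (A n m) : Set S))
      (fun m m' h => preimage_mono (hmono n h)) (hV1 n).2 ?_
    intro W hW
    obtain ⟨m, rfl⟩ := (hV1 n).1 hW
    exact ⟨m, Subset.rfl⟩
  choose f hf using key
  refine ⟨f, fun y hy => ?_⟩
  exact (hV2 ⟨y, hy⟩).mono fun n hn => hf n hn

/-- The key Gδ-separation lemma: if `O` is open and contains `Q ×ˢ Y` with `Q`
countable (enumerated by `q`) and `Y` Hurewicz, then there is a Gδ set `R ⊇ Q`
with `R ×ˢ Y ⊆ O`. -/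
lemma crux1 {Y : Set CSp} (hY : IsHurewicz Y) {Q : Set CSp} {q : ℕ → CSp}
    (hq : Q = Set.range q) {O : Set (CSp × CSp)} (hO : IsOpen O)
    (hQO : Q ×ˢ Y ⊆ O) :
    ∃ R, IsGδ R ∧ Q ⊆ R ∧ R ×ˢ Y ⊆ O := by
  rcases Y.eq_empty_or_nonempty with hYe | hYne
  · exact ⟨Set.univ, IsGδ.univ, subset_univ _, by rw [hYe]; simp⟩
  obtain ⟨y₀, hy₀⟩ := hYne
  obtain ⟨B, hBc, -, hBb⟩ := exists_countable_basis CSp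
  set P : ℕ → Set (Set CSp × Set CSp) := fun j =>
    {p | p.1 ∈ B ∧ p.2 ∈ B ∧ q j ∈ p.1 ∧ p.1 ×ˢ p.2 ⊆ O} with hP
  have hPmem : ∀ j, ∀ y ∈ Y, ∃ p ∈ P j, y ∈ p.2 := by
    intro j y hy
    have hmem : (q j, y) ∈ O := hQO ⟨by rw [hq]; exact mem_range_self j, hy⟩
    obtain ⟨u, v, hu, hv, hqu, hyv, huv⟩ := isOpen_prod_iff.mp hO _ _ hmem
    obtain ⟨u', hu'B, hqu', hu'⟩ := hBb.exists_subset_of_mem_open hqu hu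
    obtain ⟨v', hv'B, hyv', hv'⟩ := hBb.exists_subset_of_mem_open hyv hv
    exact ⟨(u', v'), ⟨hu'B, hv'B, hqu', (Set.prod_mono hu' hv').trans huv⟩, hyv'⟩
  have hPc : ∀ j, (P j).Countable := fun j => (hBc.prod hBc).mono fun p hp => Set.mem_prod.mpr ⟨hp.1, hp.2.1⟩
  have hPne : ∀ j, (P j).Nonempty := by
    intro j
    obtain ⟨p, hp, -⟩ := hPmem j y₀ hy₀
    exact ⟨p, hp⟩
  choose τ hτ using fun j => (hPc j).exists_eq_range (hPne j)
  have hτP : ∀ j r, τ j r ∈ P j := fun j r => by rw [hτ j]; exact mem_range_self r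
  set D : ℕ → ℕ → Set CSp := fun j m => ⋃ r ∈ Finset.range (m + 1), (τ j r).2 with hD
  have hDopen : ∀ j m, IsOpen (D j m) :=
    fun j m => isOpen_biUnion fun r _ => hBb.isOpen (hτP j r).2.1
  have hDmono : ∀ j, Monotone (D j) := by
    intro j m m' h y hy
    obtain ⟨r, hrr, hyr⟩ := mem_iUnion₂.mp hy
    refine mem_iUnion₂.mpr ⟨r, ?_, hyr⟩
    simp only [Finset.mem_range] at hrr ⊢
    omega
  have hDcov : ∀ j, Y ⊆ ⋃ m, D j m := by
    intro j y hy
    obtain ⟨p, hp, hyp⟩ := hPmem j y hy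
    rw [hτ j] at hp
    obtain ⟨r, rfl⟩ := hp
    exact mem_iUnion.mpr ⟨r, mem_biUnion (Finset.self_mem_range_succ r) hyp⟩
  obtain ⟨b, hb⟩ := hurewicz_seq hY hDopen hDmono hDcov
  set G : ℕ → Set CSp := fun j => ⋂ r ∈ Finset.range (b j + 1), (τ j r).1 with hG
  have hGopen : ∀ j, IsOpen (G j) :=
    fun j => isOpen_biInter_finset fun r _ => hBb.isOpen (hτP j r).1
  have hGq : ∀ j, q j ∈ G j := fun j => mem_biInter fun r _ => (hτP j r).2.2.1
  set Cyl : CSp → ℕ → Set CSp := fun x k => {x' | ∀ d < k, x' d = x d} with hCyl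
  have hCylopen : ∀ x k, IsOpen (Cyl x k) := by
    intro x k
    have : Cyl x k = ⋂ d ∈ Finset.range k, (fun x' : CSp => x' d) ⁻¹' {x d} := by
      ext x'; simp only [hCyl, Set.mem_setOf_eq, Set.mem_iInter, Set.mem_preimage, Set.mem_singleton_iff, Finset.mem_range]
    rw [this]
    exact isOpen_biInter_finset fun d _ =>
      (isOpen_discrete _).preimage (continuous_apply d)
  refine ⟨⋂ k, ⋃ j, (G j ∩ Cyl (q j) k), ?_, ?_, ?_⟩
  · exact IsGδ.iInter_of_isOpen fun k =>
      isOpen_iUnion fun j => (hGopen j).inter (hCylopen (q j) k)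
  · intro x hx
    rw [hq] at hx
    obtain ⟨j, rfl⟩ := hx
    exact mem_iInter.mpr fun k => mem_iUnion.mpr ⟨j, hGq j, fun d _ => rfl⟩
  · rintro ⟨x, y⟩ ⟨hx, hy⟩
    simp only at hx hy
    have hxk : ∀ k, ∃ j, x ∈ G j ∧ x ∈ Cyl (q j) k := by
      intro k
      have := mem_iInter.mp hx k
      obtain ⟨j, hj⟩ := mem_iUnion.mp this
      exact ⟨j, hj.1, hj.2⟩
    choose js hjs1 hjs2 using hxk
    by_cases hcase : ∃ j, {k | js k = j}.Infinite
    · obtain ⟨j, hinf⟩ := hcase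
      have hxq : x = q j := by
        funext d
        obtain ⟨k, hk_mem, hk_gt⟩ := hinf.exists_gt d
        have h1 : x d = q (js k) d := hjs2 k d hk_gt
        rwa [hk_mem] at h1
      rw [hxq]
      exact hQO ⟨by rw [hq]; exact mem_range_self j, hy⟩
    · push_neg at hcase
      have hfib : ∀ j, {k | js k = j}.Finite := fun j => hcase j
      have hrange : (Set.range js).Infinite := by
        intro hfin
        have huniv : (Set.univ : Set ℕ) ⊆ ⋃ j ∈ Set.range js, {k | js k = j} :=
          fun k _ => mem_biUnion (mem_range_self k) rfl
        exact Set.infinite_univ (Set.Finite.subset (hfin.biUnion fun j _ => hfib j) huniv)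
      obtain ⟨J, hJ⟩ := Filter.eventually_atTop.mp (hb y hy)
      have hex : ∃ k, J ≤ js k := by
        by_contra h
        push_neg at h
        exact hrange (Set.Finite.subset (Set.finite_Iio J)
          (by rintro j ⟨k, rfl⟩; exact h k))
      obtain ⟨k, hk⟩ := hex
      have hyD := hJ (js k) hk
      obtain ⟨r, hrr, hyr⟩ := mem_iUnion₂.mp hyD
      have hxr : x ∈ (τ (js k) r).1 := mem_iInter₂.mp (hjs1 k) r hrr
      exact (hτP (js k) r).2.2.2 ⟨hxr, hyr⟩

lemma crux {Y : Set CSp} (hY : IsHurewicz Y) {Q : Set CSp} (hQc : Q.Countable)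
    {O : ℕ → Set (CSp × CSp)} (hO : ∀ n, IsOpen (O n)) (hQO : ∀ n, Q ×ˢ Y ⊆ O n) :
    ∃ R, IsGδ R ∧ Q ⊆ R ∧ ∀ n, R ×ˢ Y ⊆ O n := by
  rcases Q.eq_empty_or_nonempty with rfl | hQne
  · exact ⟨∅, IsOpen.isGδ isOpen_empty, Subset.rfl, fun n => by simp⟩
  obtain ⟨q, hq⟩ := hQc.exists_eq_range hQne
  choose R hR1 hR2 hR3 using fun n => crux1 hY hq (hO n) (hQO n)
  exact ⟨⋂ n, R n, IsGδ.iInter hR1, subset_iInter hR2,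
    fun n => (Set.prod_mono (iInter_subset R n) Subset.rfl).trans (hR3 n)⟩

lemma compact_tube_bound {Y : Set CSp} (hY : IsHurewicz Y) {Kc : Set CSp}
    (hKc : IsCompact Kc) {W : ℕ → ℕ → Set (CSp × CSp)}
    (hWopen : ∀ n m, IsOpen (W n m)) (hWmono : ∀ n, Monotone (W n))
    (hcov : ∀ n, Kc ×ˢ Y ⊆ ⋃ m, W n m) :
    ∃ g : ℕ → ℕ, ∀ y ∈ Y, ∀ᶠ n in Filter.atTop, ∀ x ∈ Kc, (x, y) ∈ W n (g n) := by
  set A : ℕ → ℕ → Set CSp := fun n m => {y | ∀ x ∈ Kc, (x, y) ∈ W n m} with hA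
  have hAopen : ∀ n m, IsOpen (A n m) := by
    intro n m
    rw [isOpen_iff_forall_mem_open]
    intro y hy
    have hsub : Kc ×ˢ ({y} : Set CSp) ⊆ W n m := by
      rintro ⟨x, y'⟩ ⟨hx, hy'⟩
      simp only [mem_singleton_iff] at hy'
      subst hy'
      exact hy x hx
    obtain ⟨u, v, -, hvo, hKu, hyv, huv⟩ :=
      generalized_tube_lemma hKc isCompact_singleton (hWopen n m) hsub
    exact ⟨v, fun y' hy' x hx => huv ⟨hKu hx, hy'⟩, hvo, hyv rfl⟩
  have hAmono : ∀ n, Monotone (A n) := fun n m m' h y hy x hx => hWmono n h (hy x hx)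
  have hAcov : ∀ n, Y ⊆ ⋃ m, A n m := by
    intro n y hy
    have hsec : Kc ⊆ ⋃ m, {x | (x, y) ∈ W n m} := by
      intro x hx
      obtain ⟨m, hm⟩ := mem_iUnion.mp (hcov n (Set.mk_mem_prod hx hy))
      exact mem_iUnion.mpr ⟨m, hm⟩
    have hdir : Directed (· ⊆ ·) fun m => {x : CSp | (x, y) ∈ W n m} :=
      Monotone.directed_le fun m m' h x hx => hWmono n h hx
    obtain ⟨m, hm⟩ := hKc.elim_directed_cover _
      (fun m => (hWopen n m).preimage (Continuous.prodMk continuous_id continuous_const))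
      hsec hdir
    exact mem_iUnion.mpr ⟨m, fun x hx => hm hx⟩
  obtain ⟨g, hg⟩ := hurewicz_seq hY hAopen hAmono hAcov
  exact ⟨g, fun y hy => (hg y hy).mono fun n hn x hx => hn x hx⟩

theorem dagger_prod_hurewicz (hb : Cardinal.aleph 1 < bCardinal)
    (X Y : Set (ℕ → Bool)) (hY : IsHurewicz Y) (hX : DaggerProp X) :
    IsHurewicz (X ×ˢ Y) := by
  classical
  intro Us hUopen hUcov
  rcases (X ×ˢ Y : Set (CSp × CSp)).eq_empty_or_nonempty with hXY | hXY
  · refine ⟨fun _ => ∅, fun n => ⟨empty_subset _, finite_empty⟩, ?_⟩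
    rintro ⟨z, hz⟩
    rw [hXY] at hz
    exact absurd hz (notMem_empty z)
  obtain ⟨z₀, hz₀⟩ := hXY
  -- Phase 0 : a countable basis refinement of the covers
  obtain ⟨B, hBc, -, hBb⟩ := exists_countable_basis (CSp × CSp)
  set S : ℕ → Set (Set (CSp × CSp)) := fun n =>
    {p | p ∈ B ∧ ∃ U ∈ Us n, (Subtype.val ⁻¹' p : Set (X ×ˢ Y : Set (CSp × CSp))) ⊆ U}
    with hSdef
  have hSprop : ∀ n, ∀ z ∈ (X ×ˢ Y : Set (CSp × CSp)), ∃ p ∈ S n, z ∈ p := by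
    intro n z hz
    have hzU : (⟨z, hz⟩ : (X ×ˢ Y : Set (CSp × CSp))) ∈ ⋃₀ Us n := by
      rw [hUcov n]; trivial
    obtain ⟨U, hU, hzUm⟩ := hzU
    obtain ⟨Vamb, hVamb, hpre⟩ := isOpen_induced_iff.mp (hUopen n U hU)
    have hzV : z ∈ Vamb := by rw [← hpre] at hzUm; exact hzUm
    obtain ⟨p, hpB, hzp, hpV⟩ := hBb.exists_subset_of_mem_open hzV hVamb
    exact ⟨p, ⟨hpB, U, hU, by rw [← hpre]; exact preimage_mono hpV⟩, hzp⟩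
  have hSne : ∀ n, (S n).Nonempty := by
    intro n
    obtain ⟨p, hp, -⟩ := hSprop n z₀ hz₀
    exact ⟨p, hp⟩
  have hScnt : ∀ n, (S n).Countable := fun n => hBc.mono fun p hp => hp.1
  choose e he using fun n => (hScnt n).exists_eq_range (hSne n)
  have heS : ∀ n r, e n r ∈ S n := fun n r => by rw [he n]; exact mem_range_self r
  choose υ hυ1 hυ2 using fun n r => (heS n r).2
  set W : ℕ → ℕ → Set (CSp × CSp) := fun n m => ⋃ r ∈ Finset.range (m + 1), e n r
    with hWdef
  have hWopen : ∀ n m, IsOpen (W n m) :=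
    fun n m => isOpen_biUnion fun r _ => hBb.isOpen (heS n r).1
  have hWmono : ∀ n, Monotone (W n) := by
    intro n m m' h z hz
    obtain ⟨r, hrr, hzr⟩ := mem_iUnion₂.mp hz
    refine mem_iUnion₂.mpr ⟨r, ?_, hzr⟩
    simp only [Finset.mem_range] at hrr ⊢
    omega
  set O : ℕ → Set (CSp × CSp) := fun n => ⋃ m, W n m with hOdef
  have hOopen : ∀ n, IsOpen (O n) := fun n => isOpen_iUnion fun m => hWopen n m
  have hWcov : ∀ n, (X ×ˢ Y : Set (CSp × CSp)) ⊆ O n := by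
    intro n z hz
    obtain ⟨p, hp, hzp⟩ := hSprop n z hz
    rw [he n] at hp
    obtain ⟨r, rfl⟩ := hp
    exact mem_iUnion.mpr ⟨r, mem_iUnion₂.mpr ⟨r, Finset.self_mem_range_succ r, hzp⟩⟩
  -- the Gδ assignment
  have hexR : ∀ Q : Set CSp,
      ∃ RQ, IsGδ RQ ∧ Q ⊆ RQ ∧ (Q ⊆ X → Q.Countable → ∀ n, RQ ×ˢ Y ⊆ O n) := by
    intro Q
    by_cases hQ : Q ⊆ X ∧ Q.Countable
    · obtain ⟨R, h1, h2, h3⟩ := crux hY hQ.2 hOopen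
        (fun n => (Set.prod_mono hQ.1 Subset.rfl).trans (hWcov n))
      exact ⟨R, h1, h2, fun _ _ => h3⟩
    · exact ⟨Set.univ, IsGδ.univ, subset_univ _, fun h1 h2 => absurd ⟨h1, h2⟩ hQ⟩
  choose R hR1 hR2 hR3 using hexR
  obtain ⟨ι, hι, Qs, K, hQs, hKp, hXcov⟩ := hX R fun Q h1 h2 => ⟨hR1 Q, hR2 Q⟩
  choose Kc hKc1 hKc2 using fun i => (hKp i).1
  -- bounds for each compact piece
  have hbound : ∀ p : ι × ℕ, ∃ g : ℕ → ℕ, ∀ y ∈ Y,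
      ∀ᶠ n in Filter.atTop, ∀ x ∈ Kc p.1 p.2, (x, y) ∈ W n (g n) := by
    rintro ⟨i, j⟩
    refine compact_tube_bound hY (hKc1 i j) hWopen hWmono ?_
    intro n
    have h1 : Kc i j ⊆ R (Qs i) :=
      (by rw [← hKc2 i]; exact subset_iUnion _ j : Kc i j ⊆ K i).trans (hKp i).2
    exact (Set.prod_mono h1 Subset.rfl).trans (hR3 (Qs i) (hQs i).1 (hQs i).2 n)
  choose gf hgf using hbound
  -- a dominating function from 𝔟 > ℵ₁
  have hg : ∃ g : ℕ → ℕ, ∀ f ∈ Set.range gf, ∀ᶠ n in Filter.atTop, f n ≤ g n := by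
    by_contra h
    push_neg at h
    have hmem : bCardinal ≤ Cardinal.mk (Set.range gf) := by
      apply csInf_le'
      exact ⟨Set.range gf, rfl, by
        intro g
        obtain ⟨f, hf1, hf2⟩ := h g
        exact ⟨f, hf1, by rw [Filter.not_eventually]; simpa only [not_le] using hf2⟩⟩
    have hcard : Cardinal.mk (Set.range gf) ≤ Cardinal.aleph 1 := by
      refine le_trans Cardinal.mk_range_le ?_
      rw [Cardinal.mk_prod, Cardinal.lift_id, Cardinal.lift_id, hι, Cardinal.mk_nat,
        Cardinal.mul_eq_max (Cardinal.aleph0_le_aleph 1) le_rfl]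
      exact le_of_eq (max_eq_left (Cardinal.aleph0_le_aleph 1))
    exact absurd (hb.trans_le hmem) (not_lt.mpr hcard)
  obtain ⟨g, hgdom⟩ := hg
  -- final selection
  refine ⟨fun n => (fun r => υ n r) '' (Set.Iic (g n)), ?_, ?_⟩
  · intro n
    constructor
    · rintro U ⟨r, -, rfl⟩
      exact hυ1 n r
    · exact (Set.finite_Iic (g n)).image _
  · rintro ⟨z, hz⟩
    have hx : z.1 ∈ X := hz.1
    have hy : z.2 ∈ Y := hz.2
    obtain ⟨i, hi⟩ := mem_iUnion.mp (hXcov hx)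
    have hi' : z.1 ∈ ⋃ j, Kc i j := by rw [hKc2 i]; exact hi
    obtain ⟨j, hj⟩ := mem_iUnion.mp hi'
    have h1 := hgf (i, j) z.2 hy
    have h2 := hgdom (gf (i, j)) (mem_range_self _)
    filter_upwards [h1, h2] with n hn1 hn2
    have hzW : z ∈ W n (g n) := by
      have := hWmono n hn2 (hn1 z.1 hj)
      simpa using this
    obtain ⟨r, hrr, hzr⟩ := mem_iUnion₂.mp hzW
    refine ⟨υ n r, ⟨r, ?_, rfl⟩, hυ2 n r hzr⟩
    simp only [Finset.mem_range] at hrr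
    simp only [Set.mem_Iic]
    omega
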